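/- Let g = Σ_{j=1}^n g_j 1_{[a_{j−1},a_j)} be a nondecreasing step function with g_1 < ... < g_n and 0 = a_0 < ... < a_n = 1, and let L2(g) ⊆ L2[0,1] be the linear span of the indicators 1_{[a_{j−1},a_j)}, j = 1,...,n. Then for every continuous map x : [0,∞) → L2(g) there exists a unique y ∈ Coal_ex(g) such that y_t = g + ∫_0^t pr_{y_s} dx_s for all t ≥ 0, where the integral is the finite sum ∫_0^t pr_{y_s} dx_s := Σ_{k=1}^n ( pr_{y_{τ_k^y ∧ t}} x_{τ_{k−1}^y ∧ t} − pr_{y_{τ_k^y ∧ t}} x_{τ_k^y ∧ t} ), with τ_0^y := +∞. -/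

import Mathlib

open MeasureTheory Filter Topology
open scoped NNReal ENNReal

/-- Lebesgue measure restricted to `[0,1]`; `Lp ℝ 2 μ01` is the space `L2[0,1]`. -/
noncomputable def μ01 : Measure ℝ := volume.restrict (Set.Icc 0 1)

lemma μ01_ne_top (s : Set ℝ) : μ01 s ≠ ⊤ := by
  have h1 : μ01 s ≤ volume (Set.Icc (0 : ℝ) 1) := by
    calc μ01 s ≤ μ01 Set.univ := measure_mono (Set.subset_univ s)
    _ = volume (Set.Icc (0 : ℝ) 1) := Measure.restrict_apply_univ _
  exact ne_of_lt (lt_of_le_of_lt h1 (by rw [Real.volume_Icc]; exact ENNReal.ofReal_lt_top))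

/-- The indicator function of a measurable set `s ⊆ [0,1]` as an element of `L2[0,1]`. -/
noncomputable def indL2 (s : Set ℝ) (hs : MeasurableSet s) : Lp ℝ 2 μ01 :=
  indicatorConstLp 2 hs (μ01_ne_top s) (1 : ℝ)

/-- `L2(f)`: the set of elements of `L2[0,1]` that are (a.e. equal to) `σ(f)`-measurable
functions, i.e. of the form `φ ∘ f₀` with `φ` Borel and `f₀` a representative of `f`. -/
def L2of (f : Lp ℝ 2 μ01) : Set (Lp ℝ 2 μ01) :=
  {h | ∃ f₀ φ : ℝ → ℝ, (f : ℝ → ℝ) =ᵐ[μ01] f₀ ∧ Measurable φ ∧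
    (h : ℝ → ℝ) =ᵐ[μ01] φ ∘ f₀}

noncomputable section

variable (n : ℕ) (a : Fin (n + 1) → ℝ)

/-- The indicator of the `j`-th partition interval `[a_{j-1}, a_j)` in `L2[0,1]`. -/
def indJ (j : Fin n) : Lp ℝ 2 μ01 :=
  indL2 (Set.Ico (a j.castSucc) (a j.succ)) measurableSet_Ico

/-- `L2(g)`: the linear span of the indicators of the partition intervals. -/
def Vg : Submodule ℝ (Lp ℝ 2 μ01) := Submodule.span ℝ (Set.range (indJ n a))

variable (v : Fin n → ℝ)

/-- The step function `g = Σ_j v_j 1_{[a_{j-1},a_j)}` as an element of `L2[0,1]`. -/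
def gstep : Lp ℝ 2 μ01 := ∑ j : Fin n, v j • indJ n a j

/-- The value of `h ∈ L2(g)` on the `j`-th partition interval. -/
def coefJ (h : Lp ℝ 2 μ01) (j : Fin n) : ℝ :=
  (inner ℝ h (indJ n a j) : ℝ) / (a j.succ - a j.castSucc)

/-- The canonical representative (constant on each partition interval) of `h ∈ L2(g)`. -/
def repG (h : Lp ℝ 2 μ01) : ℝ → ℝ := fun u =>
  ∑ j : Fin n, Set.indicator (Set.Ico (a j.castSucc) (a j.succ))
    (fun _ => coefJ n a h j) u

/-- `N(f) = dim L2(f)`: the number of distinct values of `f ∈ L2(g)` on the partition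
intervals. -/
def NvalG (h : Lp ℝ 2 μ01) : ℕ :=
  (Finset.image (fun j : Fin n => coefJ n a h j) Finset.univ).card

/-- The set `Coal_ex(g)` of coalescing paths in `E^g`. -/
def CoalEx : Set C(ℝ≥0, Lp ℝ 2 μ01) :=
  {y | (∀ t : ℝ≥0, y t ∈ Vg n a) ∧ y 0 = gstep n a v ∧
    ∀ u w : ℝ, u ∈ Set.Ioo (0 : ℝ) 1 → w ∈ Set.Ioo (0 : ℝ) 1 →
      ∀ s t : ℝ≥0, s ≤ t →
        repG n a (y s) u = repG n a (y s) w → repG n a (y t) u = repG n a (y t) w}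

/-- `τ_k^y = inf{t ≥ 0 : N(y_t) ≤ k} ∈ [0,∞]` (so that `τ_0^y = +∞`). -/
def tauEx (y : C(ℝ≥0, Lp ℝ 2 μ01)) (k : ℕ) : ℝ≥0∞ :=
  sInf {s : ℝ≥0∞ | ∃ t : ℝ≥0, s = (t : ℝ≥0∞) ∧ NvalG n a (y t) ≤ k}

/-- `τ_k^y ∧ t`, as an element of `[0,∞)`. -/
def tmin (y : C(ℝ≥0, Lp ℝ 2 μ01)) (k : ℕ) (t : ℝ≥0) : ℝ≥0 :=
  (min (tauEx n a y k) (t : ℝ≥0∞)).toNNReal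

/-- `L2(f)` as a closed submodule of `L2[0,1]`. -/
def L2mod (f : Lp ℝ 2 μ01) : Submodule ℝ (Lp ℝ 2 μ01) :=
  (Submodule.span ℝ (L2of f)).topologicalClosure

/-- The orthogonal projection `pr_f` of `L2[0,1]` onto `L2(f)`. -/
def prL (f : Lp ℝ 2 μ01) : Lp ℝ 2 μ01 →L[ℝ] Lp ℝ 2 μ01 :=
  haveI : CompleteSpace (L2mod f) :=
    (Submodule.isClosed_topologicalClosure _).completeSpace_coe
  (L2mod f).subtypeL.comp (L2mod f).orthogonalProjectionOnto

end

section Comb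

variable {n : ℕ}

/-- number of distinct values -/
def Dcard {α : Type*} [DecidableEq α] (w : Fin n → α) : ℕ :=
  (Finset.image w Finset.univ).card

/-- weighted block-average operator determined by the pattern of `w` -/
noncomputable def Pav (ℓ : Fin n → ℝ) (w : Fin n → ℝ) (d : Fin n → ℝ) : Fin n → ℝ :=
  fun i => (∑ j ∈ Finset.univ.filter (fun j => w j = w i), ℓ j * d j) /
           (∑ j ∈ Finset.univ.filter (fun j => w j = w i), ℓ j)

variable {α β : Type*} [DecidableEq α] [DecidableEq β]

/-- the canonical surjection from values of `w` to values of `w'` when the pattern of `w`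
refines that of `w'` -/
noncomputable def patMap (w : Fin n → α) (w' : Fin n → β)
    (h : ∀ i j, w i = w j → w' i = w' j) :
    ↥(Finset.image w Finset.univ) → ↥(Finset.image w' Finset.univ) := fun r =>
  ⟨w' (Finset.mem_image.1 r.2).choose, Finset.mem_image.2
    ⟨(Finset.mem_image.1 r.2).choose, Finset.mem_univ _, rfl⟩⟩

lemma patMap_spec (w : Fin n → α) (w' : Fin n → β)
    (h : ∀ i j, w i = w j → w' i = w' j) (i : Fin n) :
    patMap w w' h ⟨w i, Finset.mem_image.2 ⟨i, Finset.mem_univ _, rfl⟩⟩ =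
      ⟨w' i, Finset.mem_image.2 ⟨i, Finset.mem_univ _, rfl⟩⟩ := by
  apply Subtype.ext
  exact h _ _ (Finset.mem_image.1 (Finset.mem_image.2
    ⟨i, Finset.mem_univ _, rfl⟩ : w i ∈ Finset.image w Finset.univ)).choose_spec.2

lemma patMap_surj (w : Fin n → α) (w' : Fin n → β)
    (h : ∀ i j, w i = w j → w' i = w' j) :
    Function.Surjective (patMap w w' h) := by
  rintro ⟨r', hr'⟩
  rcases Finset.mem_image.1 hr' with ⟨i, -, rfl⟩
  exact ⟨⟨w i, Finset.mem_image.2 ⟨i, Finset.mem_univ _, rfl⟩⟩, patMap_spec w w' h i⟩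

lemma Dcard_le_of_pattern {w : Fin n → α} {w' : Fin n → β}
    (h : ∀ i j, w i = w j → w' i = w' j) : Dcard w' ≤ Dcard w := by
  have := Fintype.card_le_of_surjective _ (patMap_surj w w' h)
  simpa [Dcard, Fintype.card_coe] using this

lemma pattern_of_Dcard_eq {w : Fin n → α} {w' : Fin n → β}
    (h : ∀ i j, w i = w j → w' i = w' j) (hD : Dcard w' = Dcard w) :
    ∀ i j, w' i = w' j → w i = w j := by
  intro i j hij
  have hcard : Fintype.card ↥(Finset.image w' Finset.univ)
      = Fintype.card ↥(Finset.image w Finset.univ) := by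
    simpa [Dcard, Fintype.card_coe] using hD
  have hbij : Function.Bijective (patMap w w' h) :=
    (Fintype.bijective_iff_surjective_and_card _).2 ⟨patMap_surj w w' h, hcard.symm⟩
  have h1 := patMap_spec w w' h i
  have h2 := patMap_spec w w' h j
  have : (⟨w i, Finset.mem_image.2 ⟨i, Finset.mem_univ _, rfl⟩⟩ :
      ↥(Finset.image w Finset.univ)) = ⟨w j, Finset.mem_image.2 ⟨j, Finset.mem_univ _, rfl⟩⟩ := by
    apply hbij.1
    rw [h1, h2]
    exact Subtype.ext hij
  exact congrArg Subtype.val this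

lemma Dcard_pos (hn : 0 < n) (w : Fin n → α) : 0 < Dcard w :=
  Finset.card_pos.2 ((Finset.univ_nonempty_iff.2 ⟨⟨0, hn⟩⟩).image w)

lemma Dcard_le_n (w : Fin n → α) : Dcard w ≤ n :=
  (Finset.card_image_le).trans (by simp)

lemma Dcard_eq_n {w : Fin n → α} (hw : Function.Injective w) : Dcard w = n := by
  rw [Dcard, Finset.card_image_of_injective _ hw]; simp

lemma pattern_total_of_Dcard_eq_one {w : Fin n → α} (hD : Dcard w = 1) :
    ∀ i j, w i = w j := by
  intro i j
  rcases Finset.card_eq_one.1 hD with ⟨r, hr⟩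
  have hi : w i ∈ Finset.image w Finset.univ := Finset.mem_image.2 ⟨i, Finset.mem_univ _, rfl⟩
  have hj : w j ∈ Finset.image w Finset.univ := Finset.mem_image.2 ⟨j, Finset.mem_univ _, rfl⟩
  rw [hr, Finset.mem_singleton] at hi hj
  rw [hi, hj]

lemma Pav_congr_pt {ℓ w d : Fin n → ℝ} {i j : Fin n} (h : w i = w j) :
    Pav ℓ w d i = Pav ℓ w d j := by
  have hset : (Finset.univ.filter fun k => w k = w i)
      = (Finset.univ.filter fun k => w k = w j) := by
    ext u; simp only [Finset.mem_filter, Finset.mem_univ, true_and]; rw [h]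
  unfold Pav
  rw [hset]

lemma pattern_add_Pav (ℓ w d : Fin n → ℝ) :
    ∀ i j, w i = w j → (w + Pav ℓ w d) i = (w + Pav ℓ w d) j := by
  intro i j h
  simp only [Pi.add_apply, h, Pav_congr_pt h]

lemma Pav_congr {ℓ : Fin n → ℝ} {w w' : Fin n → ℝ} (d : Fin n → ℝ)
    (h : ∀ i j, w i = w j ↔ w' i = w' j) : Pav ℓ w d = Pav ℓ w' d := by
  funext i
  have hset : (Finset.univ.filter fun k => w k = w i)
      = (Finset.univ.filter fun k => w' k = w' i) := by
    ext u; simp only [Finset.mem_filter, Finset.mem_univ, true_and]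
    exact h u i
  unfold Pav
  rw [hset]

lemma Pav_zero (ℓ w : Fin n → ℝ) : Pav ℓ w 0 = 0 := by
  funext i; simp [Pav]

lemma Pav_sub (ℓ w d e : Fin n → ℝ) : Pav ℓ w (d - e) = Pav ℓ w d - Pav ℓ w e := by
  funext i
  simp only [Pav, Pi.sub_apply, mul_sub, Finset.sum_sub_distrib, sub_div]

lemma Pav_add (ℓ w d e : Fin n → ℝ) : Pav ℓ w (d + e) = Pav ℓ w d + Pav ℓ w e := by
  funext i
  simp only [Pav, Pi.add_apply, mul_add, Finset.sum_add_distrib, add_div]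

/-- `{w | Dcard w ≤ k}` is a closed subset of `ℝ^n`. -/
lemma isClosed_Dle (k : ℕ) : IsClosed {w : Fin n → ℝ | Dcard w ≤ k} := by
  classical
  have hchar : {w : Fin n → ℝ | Dcard w ≤ k} =
      ⋃ (g : Fin n → Fin n) (_ : Dcard g ≤ k), {w | ∀ i j, g i = g j → w i = w j} := by
    ext w
    simp only [Set.mem_setOf_eq, Set.mem_iUnion]
    constructor
    · intro hw
      set g : Fin n → Fin n := fun i =>
        (Finset.univ.filter fun j => w j = w i).min' ⟨i, by simp⟩ with hg
      have hgmem : ∀ i, g i ∈ Finset.univ.filter fun j => w j = w i := fun i =>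
        Finset.min'_mem _ _
      have hwg : ∀ i, w (g i) = w i := fun i => (Finset.mem_filter.1 (hgmem i)).2
      have hpat : ∀ i j, w i = w j → g i = g j := by
        intro i j hij
        have hset : (Finset.univ.filter fun u => w u = w i)
            = (Finset.univ.filter fun u => w u = w j) := by
          ext u; simp only [Finset.mem_filter, Finset.mem_univ, true_and]; rw [hij]
        apply le_antisymm
        · exact Finset.min'_le _ _ (show g j ∈ _ from hset.symm ▸ hgmem j)
        · exact Finset.min'_le _ _ (show g i ∈ _ from hset ▸ hgmem i)
      refine ⟨g, le_trans (Dcard_le_of_pattern hpat) hw, ?_⟩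
      intro i j hgij
      rw [← hwg i, ← hwg j, hgij]
    · rintro ⟨g, hgk, hp⟩
      exact le_trans (Dcard_le_of_pattern hp) hgk
  rw [hchar]
  apply isClosed_iUnion_of_finite
  intro g
  apply isClosed_iUnion_of_finite
  intro _
  have : {w : Fin n → ℝ | ∀ i j, g i = g j → w i = w j} =
      ⋂ (i) (j), {w : Fin n → ℝ | g i = g j → w i = w j} := by
    ext w; simp [Set.mem_iInter]
  rw [this]
  apply isClosed_iInter; intro i
  apply isClosed_iInter; intro j
  by_cases h : g i = g j
  · have : {w : Fin n → ℝ | g i = g j → w i = w j} = {w | w i = w j} := by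
      ext w; simp [h]
    rw [this]
    exact isClosed_eq (continuous_apply i) (continuous_apply j)
  · have : {w : Fin n → ℝ | g i = g j → w i = w j} = Set.univ := by
      ext w; simp [h]
    rw [this]
    exact isClosed_univ

end Comb
section L2a

lemma coeFn_finset_sum {ι : Type*} (s : Finset ι) (f : ι → Lp ℝ 2 μ01) :
    ⇑(∑ i ∈ s, f i) =ᵐ[μ01] fun x => ∑ i ∈ s, f i x := by
  classical
  induction s using Finset.induction with
  | empty => simp only [Finset.sum_empty]; exact Lp.coeFn_zero (E := ℝ) (p := 2) (μ := μ01)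
  | @insert i s hi ih =>
    rw [Finset.sum_insert hi]
    filter_upwards [Lp.coeFn_add (f i) (∑ i ∈ s, f i), ih] with x hx hx2
    rw [hx]
    simp only [Pi.add_apply, hx2, Finset.sum_insert hi]

variable {n : ℕ} (a : Fin (n + 1) → ℝ)

/-- length of the `j`-th interval -/
def lenJ (j : Fin n) : ℝ := a j.succ - a j.castSucc

/-- the element of `L2[0,1]` with value `d j` on the `j`-th interval -/
noncomputable def toF (d : Fin n → ℝ) : Lp ℝ 2 μ01 := ∑ j : Fin n, d j • indJ n a j

/-- the canonical step-function representative -/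
noncomputable def stepF (d : Fin n → ℝ) : ℝ → ℝ := fun u =>
  ∑ j : Fin n, Set.indicator (Set.Ico (a j.castSucc) (a j.succ)) (fun _ => d j) u

variable (ha : StrictMono a) (ha0 : a 0 = 0) (ha1 : a (Fin.last n) = 1)

section withHa
include ha

lemma lenJ_pos (j : Fin n) : 0 < lenJ a j :=
  sub_pos.2 (ha (Fin.castSucc_lt_succ (i := j)))

include ha0 ha1 in
lemma Ico_subset_unit (j : Fin n) :
    Set.Ico (a j.castSucc) (a j.succ) ⊆ Set.Icc 0 1 := by
  intro u hu
  constructor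
  · calc (0:ℝ) = a 0 := ha0.symm
    _ ≤ a j.castSucc := ha.monotone (Fin.zero_le _)
    _ ≤ u := hu.1
  · calc u ≤ a j.succ := le_of_lt hu.2
    _ ≤ a (Fin.last n) := ha.monotone (Fin.le_last _)
    _ = 1 := ha1

lemma Ico_disjoint {i j : Fin n} (hij : i ≠ j) :
    Set.Ico (a i.castSucc) (a i.succ) ∩ Set.Ico (a j.castSucc) (a j.succ) = ∅ := by
  have key : ∀ i j : Fin n, i < j →
      Set.Ico (a i.castSucc) (a i.succ) ∩ Set.Ico (a j.castSucc) (a j.succ) = ∅ := by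
    intro i j hlt
    have hle : a i.succ ≤ a j.castSucc := by
      apply ha.monotone
      rw [Fin.le_def, Fin.val_succ, Fin.coe_castSucc]
      exact Nat.succ_le_of_lt (Fin.lt_def.1 hlt)
    apply Set.eq_empty_iff_forall_notMem.2
    intro u hu
    have h1 := hu.1.2
    have h2 := hu.2.1
    linarith
  rcases lt_or_gt_of_ne hij with h | h
  · exact key i j h
  · rw [Set.inter_comm]; exact key j i h

end withHa

end L2a
section L2b

variable {n : ℕ} (a : Fin (n + 1) → ℝ) (ha : StrictMono a) (ha0 : a 0 = 0)
  (ha1 : a (Fin.last n) = 1)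

include ha in
lemma stepF_eq_of_mem {d : Fin n → ℝ} {j : Fin n} {u : ℝ}
    (hu : u ∈ Set.Ico (a j.castSucc) (a j.succ)) : stepF a d u = d j := by
  unfold stepF
  rw [Finset.sum_eq_single j]
  · exact Set.indicator_of_mem hu _
  · intro i _ hij
    apply Set.indicator_of_notMem
    intro hui
    have : u ∈ Set.Ico (a i.castSucc) (a i.succ) ∩ Set.Ico (a j.castSucc) (a j.succ) :=
      ⟨hui, hu⟩
    rw [Ico_disjoint a ha hij] at this
    exact this
  · intro h; exact absurd (Finset.mem_univ j) h

include ha0 ha1 in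
lemma exists_interval {u : ℝ} (hu : u ∈ Set.Ico (0:ℝ) 1) :
    ∃ j : Fin n, u ∈ Set.Ico (a j.castSucc) (a j.succ) := by
  have hn : 0 < n := by
    rcases Nat.eq_zero_or_pos n with h | h
    · subst h
      rw [show (Fin.last 0) = 0 from rfl, ha0] at ha1
      norm_num at ha1
    · exact h
  classical
  -- largest k with a k ≤ u
  set S : Finset (Fin (n+1)) := Finset.univ.filter (fun k => a k ≤ u) with hS
  have hS0 : (0 : Fin (n+1)) ∈ S := by
    simp only [hS, Finset.mem_filter, Finset.mem_univ, true_and, ha0]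
    exact hu.1
  have hSne : S.Nonempty := ⟨0, hS0⟩
  set k := S.max' hSne with hk
  have hkmem : k ∈ S := Finset.max'_mem _ _
  have hku : a k ≤ u := (Finset.mem_filter.1 hkmem).2
  have hklast : k ≠ Fin.last n := by
    intro h
    rw [h, ha1] at hku
    exact absurd hu.2 (not_lt.2 hku)
  have hkval : (k : ℕ) < n := by
    rcases lt_or_eq_of_le (Nat.lt_succ_iff.1 k.2) with h | h
    · exact h
    · exact absurd (Fin.ext h) hklast
  have hcastk : (⟨(k:ℕ), hkval⟩ : Fin n).castSucc = k := Fin.ext rfl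
  have hsucck : (⟨(k:ℕ), hkval⟩ : Fin n).succ
      = (⟨(k:ℕ)+1, Nat.succ_lt_succ hkval⟩ : Fin (n+1)) := Fin.ext rfl
  refine ⟨⟨(k : ℕ), hkval⟩, ?_, ?_⟩
  · rw [hcastk]; exact hku
  · by_contra hc
    push_neg at hc
    rw [hsucck] at hc
    have hmem : (⟨(k:ℕ)+1, Nat.succ_lt_succ hkval⟩ : Fin (n+1)) ∈ S := by
      simp only [hS, Finset.mem_filter, Finset.mem_univ, true_and]
      exact hc
    have hle := Finset.le_max' S _ hmem
    rw [← hk] at hle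
    have hval : (k : ℕ) + 1 ≤ (k : ℕ) := hle
    simp at hval

lemma ae_eq_of_eqOn_Ico {f g : ℝ → ℝ}
    (h : ∀ u ∈ Set.Ico (0:ℝ) 1, f u = g u) : f =ᵐ[μ01] g := by
  have hnull : μ01 (Set.Ico (0:ℝ) 1)ᶜ = 0 := by
    rw [μ01, Measure.restrict_apply' measurableSet_Icc]
    have : (Set.Ico (0:ℝ) 1)ᶜ ∩ Set.Icc 0 1 = {1} := by
      ext u
      simp only [Set.mem_inter_iff, Set.mem_compl_iff, Set.mem_Ico, Set.mem_Icc,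
        Set.mem_singleton_iff, not_and, not_lt]
      constructor
      · rintro ⟨h1, h2, h3⟩
        have := h1 h2
        linarith
      · rintro rfl
        exact ⟨fun _ => le_refl 1, by norm_num, le_refl 1⟩
    rw [this, Real.volume_singleton]
  exact Filter.eventuallyEq_of_mem (mem_ae_iff.2 hnull) h

include ha ha0 ha1 in
lemma coeFn_toF (d : Fin n → ℝ) : ⇑(toF a d) =ᵐ[μ01] stepF a d := by
  unfold toF stepF
  have h1 := coeFn_finset_sum (Finset.univ) (fun j => d j • indJ n a j)
  have h2 : ∀ j : Fin n, ⇑(d j • indJ n a j) =ᵐ[μ01]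
      fun u => Set.indicator (Set.Ico (a j.castSucc) (a j.succ)) (fun _ => d j) u := by
    intro j
    filter_upwards [Lp.coeFn_smul (d j) (indJ n a j),
      indicatorConstLp_coeFn (p := 2) (μ := μ01)
        (hs := measurableSet_Ico (a := a j.castSucc) (b := a j.succ))
        (hμs := μ01_ne_top _) (c := (1:ℝ))] with u hu hu2
    rw [hu]
    simp only [Pi.smul_apply]
    rw [show (indJ n a j : ℝ → ℝ) u = Set.indicator (Set.Ico (a j.castSucc) (a j.succ))
      (fun _ => (1:ℝ)) u from hu2]
    simp only [smul_eq_mul]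
    by_cases h : u ∈ Set.Ico (a j.castSucc) (a j.succ)
    · rw [Set.indicator_of_mem h, Set.indicator_of_mem h]; ring
    · rw [Set.indicator_of_notMem h, Set.indicator_of_notMem h]; ring
  have h3 : ∀ᵐ u ∂μ01, ∀ j ∈ Finset.univ, (d j • indJ n a j : Lp ℝ 2 μ01) u =
      Set.indicator (Set.Ico (a j.castSucc) (a j.succ)) (fun _ => d j) u :=
    (ae_ball_iff (Finset.countable_toSet _)).2 fun j _ => h2 j
  filter_upwards [h1, h3] with u hu hu3
  rw [hu]
  exact Finset.sum_congr rfl fun j hj => hu3 j hj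

end L2b
section L2c

variable {n : ℕ} (a : Fin (n + 1) → ℝ) (ha : StrictMono a) (ha0 : a 0 = 0)
  (ha1 : a (Fin.last n) = 1)

include ha ha0 ha1 in
lemma inner_indJ (i j : Fin n) :
    (inner ℝ (indJ n a i) (indJ n a j) : ℝ) = if i = j then lenJ a j else 0 := by
  have h1 : (inner ℝ (indJ n a i) (indJ n a j) : ℝ)
      = ∫ u in Set.Ico (a i.castSucc) (a i.succ), (indJ n a j : ℝ → ℝ) u ∂μ01 :=
    L2.inner_indicatorConstLp_one measurableSet_Ico (μ01_ne_top _) (indJ n a j)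
  rw [h1]
  have h2 : ∫ u in Set.Ico (a i.castSucc) (a i.succ), (indJ n a j : ℝ → ℝ) u ∂μ01
      = ∫ u in Set.Ico (a i.castSucc) (a i.succ),
          Set.indicator (Set.Ico (a j.castSucc) (a j.succ)) (fun _ => (1:ℝ)) u ∂μ01 := by
    apply integral_congr_ae
    exact ae_restrict_of_ae (indicatorConstLp_coeFn (p := 2) (μ := μ01)
      (hs := measurableSet_Ico) (hμs := μ01_ne_top _) (c := (1:ℝ)))
  rw [h2, integral_indicator_const (1:ℝ) measurableSet_Ico,
    measureReal_def, Measure.restrict_apply measurableSet_Ico]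
  by_cases hij : i = j
  · subst hij
    rw [Set.inter_self, if_pos rfl]
    have : μ01 (Set.Ico (a i.castSucc) (a i.succ)) = ENNReal.ofReal (lenJ a i) := by
      rw [μ01, Measure.restrict_apply measurableSet_Ico,
        Set.inter_eq_self_of_subset_left (Ico_subset_unit a ha ha0 ha1 i), Real.volume_Ico,
        lenJ]
    rw [this, smul_eq_mul, mul_one, ENNReal.toReal_ofReal (le_of_lt (lenJ_pos a ha i))]
  · rw [if_neg hij]
    rw [show Set.Ico (a j.castSucc) (a j.succ) ∩ Set.Ico (a i.castSucc) (a i.succ) = ∅ from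
      Ico_disjoint a ha (Ne.symm hij)]
    simp

include ha ha0 ha1 in
lemma inner_toF_indJ (d : Fin n → ℝ) (j : Fin n) :
    (inner ℝ (toF a d) (indJ n a j) : ℝ) = d j * lenJ a j := by
  unfold toF
  rw [sum_inner]
  rw [Finset.sum_eq_single j]
  · rw [real_inner_smul_left, inner_indJ a ha ha0 ha1 j j, if_pos rfl]
  · intro i _ hij
    rw [real_inner_smul_left, inner_indJ a ha ha0 ha1 i j, if_neg hij, mul_zero]
  · intro h; exact absurd (Finset.mem_univ j) h

include ha ha0 ha1 in
lemma inner_toF_toF (d e : Fin n → ℝ) :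
    (inner ℝ (toF a d) (toF a e) : ℝ) = ∑ j : Fin n, d j * e j * lenJ a j := by
  conv_lhs => rw [show toF a e = ∑ j : Fin n, e j • indJ n a j from rfl]
  rw [inner_sum]
  apply Finset.sum_congr rfl
  intro j _
  rw [real_inner_smul_right, inner_toF_indJ a ha ha0 ha1 d j]
  ring

include ha ha0 ha1 in
lemma coefJ_toF (d : Fin n → ℝ) (j : Fin n) : coefJ n a (toF a d) j = d j := by
  unfold coefJ
  rw [inner_toF_indJ a ha ha0 ha1 d j]
  have h : a j.succ - a j.castSucc ≠ 0 := by
    have := lenJ_pos a ha j; unfold lenJ at this; exact ne_of_gt this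
  unfold lenJ
  rw [mul_div_assoc, div_self h, mul_one]

include ha ha0 ha1 in
lemma coefVec_toF (d : Fin n → ℝ) : (fun j => coefJ n a (toF a d) j) = d :=
  funext fun j => coefJ_toF a ha ha0 ha1 d j

include ha ha0 ha1 in
lemma toF_inj {d e : Fin n → ℝ} (h : toF a d = toF a e) : d = e := by
  rw [← coefVec_toF a ha ha0 ha1 d, ← coefVec_toF a ha ha0 ha1 e, h]

lemma mem_Vg_iff {h : Lp ℝ 2 μ01} : h ∈ Vg n a ↔ ∃ d : Fin n → ℝ, toF a d = h := by
  rw [Vg, Submodule.mem_span_range_iff_exists_fun ℝ]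
  rfl

lemma gstep_eq_toF (v : Fin n → ℝ) : gstep n a v = toF a v := rfl

include ha ha0 ha1 in
lemma NvalG_toF (d : Fin n → ℝ) : NvalG n a (toF a d) = Dcard d := by
  unfold NvalG Dcard
  rw [show (fun j => coefJ n a (toF a d) j) = d from coefVec_toF a ha ha0 ha1 d]

include ha ha0 ha1 in
lemma repG_toF (d : Fin n → ℝ) : repG n a (toF a d) = stepF a d := by
  funext u
  unfold repG stepF
  apply Finset.sum_congr rfl
  intro j _
  rw [coefJ_toF a ha ha0 ha1 d j]

lemma continuous_toF : Continuous (fun d : Fin n → ℝ => toF a d) := by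
  unfold toF
  apply continuous_finset_sum
  intro j _
  exact (continuous_apply j).smul continuous_const

lemma toF_add (d e : Fin n → ℝ) : toF a (d + e) = toF a d + toF a e := by
  unfold toF
  rw [← Finset.sum_add_distrib]
  apply Finset.sum_congr rfl
  intro j _
  rw [Pi.add_apply, add_smul]

lemma toF_sub (d e : Fin n → ℝ) : toF a (d - e) = toF a d - toF a e := by
  unfold toF
  rw [← Finset.sum_sub_distrib]
  apply Finset.sum_congr rfl
  intro j _
  rw [Pi.sub_apply, sub_smul]

end L2c
section L2d

variable {n : ℕ} (a : Fin (n + 1) → ℝ) (ha : StrictMono a) (ha0 : a 0 = 0)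
  (ha1 : a (Fin.last n) = 1)

/-- `toF` as a linear map -/
noncomputable def toFL : (Fin n → ℝ) →ₗ[ℝ] Lp ℝ 2 μ01 where
  toFun := toF a
  map_add' := toF_add a
  map_smul' := fun r d => by
    show (∑ j : Fin n, (r • d) j • indJ n a j) = r • ∑ j : Fin n, d j • indJ n a j
    rw [Finset.smul_sum]
    apply Finset.sum_congr rfl
    intro j _
    simp [smul_smul]

/-- precomposition with `ω` as a linear map -/
def precompL (ω : Fin n → ℝ) : (ℝ → ℝ) →ₗ[ℝ] (Fin n → ℝ) where
  toFun := fun ψ => ψ ∘ ω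
  map_add' := fun _ _ => rfl
  map_smul' := fun _ _ => rfl

/-- the span of the indicators of the level sets of `ω` -/
noncomputable def Bmod (ω : Fin n → ℝ) : Submodule ℝ (Lp ℝ 2 μ01) :=
  LinearMap.range ((toFL a).comp (precompL ω))

lemma mem_Bmod_iff {ω : Fin n → ℝ} {h : Lp ℝ 2 μ01} :
    h ∈ Bmod a ω ↔ ∃ ψ : ℝ → ℝ, toF a (ψ ∘ ω) = h := Iff.rfl

lemma Bmod_finiteDimensional (ω : Fin n → ℝ) : FiniteDimensional ℝ (Bmod a ω) := by
  have hle : Bmod a ω ≤ LinearMap.range (toFL a) := by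
    rintro x ⟨ψ, rfl⟩
    exact ⟨ψ ∘ ω, rfl⟩
  exact Submodule.finiteDimensional_of_le hle

set_option synthInstance.maxHeartbeats 1000000 in
lemma Bmod_isClosed (ω : Fin n → ℝ) : IsClosed ((Bmod a ω : Submodule ℝ (Lp ℝ 2 μ01)) : Set (Lp ℝ 2 μ01)) := by
  haveI := Bmod_finiteDimensional a ω
  exact Submodule.closed_of_finiteDimensional _

lemma exists_measurable_ext (ω : Fin n → ℝ) (ψ : ℝ → ℝ) :
    ∃ φ : ℝ → ℝ, Measurable φ ∧ ∀ i, φ (ω i) = ψ (ω i) := by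
  classical
  set A : Fin n → Set ℝ := fun i => {r' | ω i = r' ∧ ∀ i', i' < i → ω i' ≠ r'} with hA
  have hAsub : ∀ i, A i ⊆ {ω i} := by
    intro i r hr
    exact Set.mem_singleton_iff.2 hr.1.symm
  have hAmeas : ∀ i, MeasurableSet (A i) := fun i =>
    (Set.Finite.subset (Set.finite_singleton _) (hAsub i)).measurableSet
  refine ⟨fun r => ∑ i : Fin n, Set.indicator (A i) (fun _ => ψ (ω i)) r, ?_, ?_⟩
  · apply Finset.measurable_sum
    intro i _
    exact measurable_const.indicator (hAmeas i)
  · intro j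
    have hne : (Finset.univ.filter fun i => ω i = ω j).Nonempty := ⟨j, by simp⟩
    set i₀ := (Finset.univ.filter fun i => ω i = ω j).min' hne with hi₀
    have hi₀mem : i₀ ∈ Finset.univ.filter fun i => ω i = ω j := Finset.min'_mem _ _
    have hω : ω i₀ = ω j := (Finset.mem_filter.1 hi₀mem).2
    show (∑ i : Fin n, (A i).indicator (fun _ => ψ (ω i)) (ω j)) = ψ (ω j)
    rw [Finset.sum_eq_single i₀]
    · rw [Set.indicator_of_mem, hω]
      refine ⟨hω, ?_⟩
      intro i' hi' hcon
      have : i' ∈ Finset.univ.filter fun i => ω i = ω j := by simp [hcon]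
      exact absurd (Finset.min'_le _ _ this) (not_le.2 hi')
    · intro i _ hi
      apply Set.indicator_of_notMem
      rintro ⟨h1, h2⟩
      have himem : i ∈ Finset.univ.filter fun k => ω k = ω j := by simp [h1]
      have : i₀ < i := lt_of_le_of_ne (Finset.min'_le _ _ himem) (Ne.symm hi)
      exact h2 i₀ this hω
    · intro h; exact absurd (Finset.mem_univ i₀) h

include ha ha0 ha1 in
lemma L2of_subset_Bmod (ω : Fin n → ℝ) :
    L2of (toF a ω) ⊆ (Bmod a ω : Set (Lp ℝ 2 μ01)) := by
  rintro h ⟨f₀, φ, hf₀, hφm, hh⟩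
  have h1 : f₀ =ᵐ[μ01] stepF a ω := hf₀.symm.trans (coeFn_toF a ha ha0 ha1 ω)
  have h2 : (φ ∘ f₀) =ᵐ[μ01] (φ ∘ stepF a ω) := h1.fun_comp φ
  have h3 : (φ ∘ stepF a ω) =ᵐ[μ01] stepF a (φ ∘ ω) := by
    apply ae_eq_of_eqOn_Ico
    intro u hu
    rcases exists_interval a ha0 ha1 hu with ⟨j, hj⟩
    simp only [Function.comp_apply]
    rw [stepF_eq_of_mem a ha hj, stepF_eq_of_mem a ha hj]
    rfl
  have h4 : ⇑h =ᵐ[μ01] ⇑(toF a (φ ∘ ω)) :=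
    hh.trans (h2.trans (h3.trans (coeFn_toF a ha ha0 ha1 (φ ∘ ω)).symm))
  have h5 : h = toF a (φ ∘ ω) := Lp.ext h4
  exact ⟨φ, h5.symm⟩

include ha ha0 ha1 in
lemma Bmod_subset_L2of (ω : Fin n → ℝ) :
    (Bmod a ω : Set (Lp ℝ 2 μ01)) ⊆ L2of (toF a ω) := by
  rintro h ⟨ψ, rfl⟩
  rcases exists_measurable_ext ω ψ with ⟨φ, hφm, hφ⟩
  refine ⟨stepF a ω, φ, coeFn_toF a ha ha0 ha1 ω, hφm, ?_⟩
  have h1 : ⇑(toF a (ψ ∘ ω)) =ᵐ[μ01] stepF a (ψ ∘ ω) := coeFn_toF a ha ha0 ha1 (ψ ∘ ω)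
  apply h1.trans
  apply ae_eq_of_eqOn_Ico
  intro u hu
  rcases exists_interval a ha0 ha1 hu with ⟨j, hj⟩
  simp only [Function.comp_apply]
  rw [stepF_eq_of_mem a ha hj, stepF_eq_of_mem a ha hj]
  exact (hφ j).symm

include ha ha0 ha1 in
lemma L2mod_toF (ω : Fin n → ℝ) : L2mod (toF a ω) = Bmod a ω := by
  apply le_antisymm
  · unfold L2mod
    apply Submodule.topologicalClosure_minimal
    · exact Submodule.span_le.2 (L2of_subset_Bmod a ha ha0 ha1 ω)
    · exact Bmod_isClosed a ω
  · intro h hmem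
    exact Submodule.le_topologicalClosure _
      (Submodule.subset_span (Bmod_subset_L2of a ha ha0 ha1 ω hmem))

include ha ha0 ha1 in
lemma prL_toF (ω d : Fin n → ℝ) :
    prL (toF a ω) (toF a d) = toF a (Pav (lenJ a) ω d) := by
  classical
  haveI : CompleteSpace (L2mod (toF a ω)) :=
    (Submodule.isClosed_topologicalClosure _).completeSpace_coe
  have hrfl : prL (toF a ω) (toF a d)
      = ↑((L2mod (toF a ω)).orthogonalProjectionOnto (toF a d)) := rfl
  rw [hrfl, ← Submodule.starProjection_apply]
  apply Submodule.eq_starProjection_of_mem_of_inner_eq_zero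
  · rw [L2mod_toF a ha ha0 ha1 ω]
    exact ⟨fun r => (∑ j ∈ Finset.univ.filter (fun j => ω j = r), lenJ a j * d j) /
      (∑ j ∈ Finset.univ.filter (fun j => ω j = r), lenJ a j), rfl⟩
  · intro z hz
    rw [L2mod_toF a ha ha0 ha1 ω] at hz
    rcases hz with ⟨ψ, rfl⟩
    have hz2 : ((toFL a).comp (precompL ω)) ψ = toF a (ψ ∘ ω) := rfl
    rw [hz2, ← toF_sub, inner_toF_toF a ha ha0 ha1]
    rw [← Finset.sum_fiberwise_of_maps_to (g := ω) (t := Finset.image ω Finset.univ)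
      (fun j _ => Finset.mem_image.2 ⟨j, Finset.mem_univ _, rfl⟩)]
    apply Finset.sum_eq_zero
    intro r hr
    set fib := Finset.univ.filter (fun j => ω j = r) with hfib
    set L := ∑ j ∈ fib, lenJ a j with hL
    set S := ∑ j ∈ fib, lenJ a j * d j with hS
    have hLpos : 0 < L := by
      apply Finset.sum_pos (fun j _ => lenJ_pos a ha j)
      rcases Finset.mem_image.1 hr with ⟨i, _, hi⟩
      exact ⟨i, Finset.mem_filter.2 ⟨Finset.mem_univ _, hi⟩⟩
    have hstep : ∀ j ∈ fib, (d - Pav (lenJ a) ω d) j * (ψ ∘ ω) j * lenJ a j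
        = ψ r * (lenJ a j * d j) - ψ r * (S / L) * lenJ a j := by
      intro j hj
      have hjr : ω j = r := (Finset.mem_filter.1 hj).2
      have hPav : Pav (lenJ a) ω d j = S / L := by
        unfold Pav
        rw [hjr]
      rw [Pi.sub_apply, hPav, Function.comp_apply, hjr]
      ring
    rw [Finset.sum_congr rfl hstep, Finset.sum_sub_distrib, ← Finset.mul_sum, ← Finset.mul_sum,
      ← hL, ← hS]
    rw [mul_assoc, div_mul_cancel₀ S (ne_of_gt hLpos)]
    ring

end L2d
section Dyn1

variable {n : ℕ}

/-- τ_k for a coordinate path -/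
noncomputable def tauV (u : ℝ≥0 → Fin n → ℝ) (k : ℕ) : ℝ≥0∞ :=
  sInf {s : ℝ≥0∞ | ∃ t : ℝ≥0, s = (t : ℝ≥0∞) ∧ Dcard (u t) ≤ k}

/-- τ_k ∧ t as an element of ℝ≥0 -/
noncomputable def mV (u : ℝ≥0 → Fin n → ℝ) (k : ℕ) (t : ℝ≥0) : ℝ≥0 :=
  (min (tauV u k) (t : ℝ≥0∞)).toNNReal

lemma tauV_antitone {u : ℝ≥0 → Fin n → ℝ} {k k' : ℕ} (h : k ≤ k') : tauV u k' ≤ tauV u k := by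
  apply sInf_le_sInf
  rintro s ⟨t, rfl, ht⟩
  exact ⟨t, rfl, le_trans ht h⟩

lemma tauV_zero (hn : 0 < n) (u : ℝ≥0 → Fin n → ℝ) : tauV u 0 = ⊤ := by
  rw [tauV, show {s : ℝ≥0∞ | ∃ t : ℝ≥0, s = (t : ℝ≥0∞) ∧ Dcard (u t) ≤ 0} = ∅ from ?_, sInf_empty]
  apply Set.eq_empty_iff_forall_notMem.2
  rintro s ⟨t, rfl, ht⟩
  exact absurd ht (by simpa using (Dcard_pos hn (u t)).ne')

lemma tauV_n (u : ℝ≥0 → Fin n → ℝ) : tauV u n = 0 :=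
  le_antisymm (sInf_le ⟨0, by simp, Dcard_le_n _⟩) zero_le

lemma tauV_le_of_Dle {u : ℝ≥0 → Fin n → ℝ} {k : ℕ} {t : ℝ≥0} (h : Dcard (u t) ≤ k) :
    tauV u k ≤ (t : ℝ≥0∞) := sInf_le ⟨t, rfl, h⟩

lemma lt_tauV_imp {u : ℝ≥0 → Fin n → ℝ} {k : ℕ} {t : ℝ≥0} (h : (t : ℝ≥0∞) < tauV u k) :
    k < Dcard (u t) := by
  by_contra hc
  push_neg at hc
  exact absurd (tauV_le_of_Dle hc) (not_le.2 h)

lemma tauV_attained {u : ℝ≥0 → Fin n → ℝ} (hu : Continuous u) {k : ℕ}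
    (h : tauV u k ≠ ⊤) :
    tauV u k = ((tauV u k).toNNReal : ℝ≥0∞) ∧ Dcard (u (tauV u k).toNNReal) ≤ k := by
  set T : Set ℝ≥0 := {t : ℝ≥0 | Dcard (u t) ≤ k} with hT
  have hTclosed : IsClosed T := (isClosed_Dle k).preimage hu
  have hset : {s : ℝ≥0∞ | ∃ t : ℝ≥0, s = (t : ℝ≥0∞) ∧ Dcard (u t) ≤ k}
      = (fun t : ℝ≥0 => (t : ℝ≥0∞)) '' T := by
    ext s
    constructor
    · rintro ⟨t, rfl, ht⟩; exact ⟨t, ht, rfl⟩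
    · rintro ⟨t, ht, rfl⟩; exact ⟨t, rfl, ht⟩
  have hTne : T.Nonempty := by
    by_contra hc
    rw [Set.not_nonempty_iff_eq_empty] at hc
    rw [tauV, hset, hc] at h
    simp at h
  have htau : tauV u k = ((sInf T : ℝ≥0) : ℝ≥0∞) := by
    rw [tauV, hset, sInf_image, ENNReal.coe_sInf hTne]
  have hmem : sInf T ∈ T := hTclosed.csInf_mem hTne (OrderBot.bddBelow T)
  constructor
  · rw [htau, ENNReal.toNNReal_coe]
  · rw [htau, ENNReal.toNNReal_coe]
    exact hmem

lemma Dcard_antitone_of_coal {u : ℝ≥0 → Fin n → ℝ}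
    (hcoal : ∀ s t : ℝ≥0, s ≤ t → ∀ i j, u s i = u s j → u t i = u t j)
    {s t : ℝ≥0} (h : s ≤ t) : Dcard (u t) ≤ Dcard (u s) :=
  Dcard_le_of_pattern (hcoal s t h)

lemma mV_le_t (u : ℝ≥0 → Fin n → ℝ) (k : ℕ) (t : ℝ≥0) : mV u k t ≤ t := by
  have : min (tauV u k) (t : ℝ≥0∞) ≤ (t : ℝ≥0∞) := min_le_right _ _
  have h2 := ENNReal.toNNReal_mono ENNReal.coe_ne_top this
  rwa [ENNReal.toNNReal_coe] at h2

lemma mV_antitone_k {u : ℝ≥0 → Fin n → ℝ} {k k' : ℕ} (h : k ≤ k') (t : ℝ≥0) :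
    mV u k' t ≤ mV u k t := by
  apply ENNReal.toNNReal_mono
  · exact ne_top_of_le_ne_top ENNReal.coe_ne_top (min_le_right _ _)
  · exact min_le_min (tauV_antitone h) (le_refl _)

lemma mV_coe_of_tau_le {u : ℝ≥0 → Fin n → ℝ} {k : ℕ} {t : ℝ≥0}
    (h : tauV u k ≤ (t : ℝ≥0∞)) : ((mV u k t : ℝ≥0) : ℝ≥0∞) = tauV u k := by
  rw [mV, min_eq_left h, ENNReal.coe_toNNReal (ne_top_of_le_ne_top ENNReal.coe_ne_top h)]

lemma mV_of_le_tau {u : ℝ≥0 → Fin n → ℝ} {k : ℕ} {t : ℝ≥0}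
    (h : (t : ℝ≥0∞) ≤ tauV u k) : mV u k t = t := by
  rw [mV, min_eq_right h, ENNReal.toNNReal_coe]

lemma mV_top (u : ℝ≥0 → Fin n → ℝ) {k : ℕ} (h : tauV u k = ⊤) (t : ℝ≥0) : mV u k t = t :=
  mV_of_le_tau (by rw [h]; exact le_top)

lemma mV_n (u : ℝ≥0 → Fin n → ℝ) (t : ℝ≥0) : mV u n t = 0 := by
  have h : ((mV u n t : ℝ≥0) : ℝ≥0∞) = tauV u n := mV_coe_of_tau_le (by rw [tauV_n]; exact zero_le)
  rw [tauV_n] at h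
  exact_mod_cast h

lemma mV_zero_k (hn : 0 < n) (u : ℝ≥0 → Fin n → ℝ) (t : ℝ≥0) : mV u 0 t = t :=
  mV_top u (tauV_zero hn u) t

end Dyn1
section Dyn2

variable {n : ℕ} (c : ℝ≥0 → Fin n → ℝ) (ℓ : Fin n → ℝ)

lemma continuous_phi (hc : Continuous c) (s : ℝ≥0) (ω : Fin n → ℝ) :
    Continuous (fun t : ℝ≥0 => ω + Pav ℓ ω (c t - c s)) := by
  apply continuous_pi
  intro i
  unfold Pav
  simp only [Pi.add_apply, Pi.sub_apply]
  apply Continuous.add continuous_const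
  apply Continuous.div_const
  apply continuous_finset_sum
  intro j _
  exact continuous_const.mul (((continuous_apply j).comp hc).sub continuous_const)

/-- first collision time after `s` started from `ω` -/
noncomputable def nextT (s : ℝ≥0) (ω : Fin n → ℝ) : ℝ≥0∞ :=
  sInf {q : ℝ≥0∞ | ∃ t : ℝ≥0, q = (t : ℝ≥0∞) ∧ s ≤ t ∧
    Dcard (ω + Pav ℓ ω (c t - c s)) < Dcard ω}

lemma nextT_ge (s : ℝ≥0) (ω : Fin n → ℝ) : (s : ℝ≥0∞) ≤ nextT c ℓ s ω := by
  apply le_sInf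
  rintro q ⟨t, rfl, hst, _⟩
  exact_mod_cast hst

/-- no collision before `nextT` -/
lemma nextT_no_drop {s : ℝ≥0} {ω : Fin n → ℝ} {t : ℝ≥0} (hst : s ≤ t)
    (h : (t : ℝ≥0∞) < nextT c ℓ s ω) :
    Dcard (ω + Pav ℓ ω (c t - c s)) = Dcard ω := by
  apply le_antisymm (Dcard_le_of_pattern (pattern_add_Pav ℓ ω (c t - c s)))
  by_contra hcon
  push_neg at hcon
  have hmem : (t : ℝ≥0∞) ∈ {q : ℝ≥0∞ | ∃ t' : ℝ≥0, q = (t' : ℝ≥0∞) ∧ s ≤ t' ∧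
      Dcard (ω + Pav ℓ ω (c t' - c s)) < Dcard ω} := ⟨t, rfl, hst, hcon⟩
  exact absurd (sInf_le hmem : nextT c ℓ s ω ≤ (t : ℝ≥0∞)) (not_le.2 h)

lemma nextT_pattern_iff {s : ℝ≥0} {ω : Fin n → ℝ} {t : ℝ≥0} (hst : s ≤ t)
    (h : (t : ℝ≥0∞) < nextT c ℓ s ω) :
    ∀ i j, ω i = ω j ↔ (ω + Pav ℓ ω (c t - c s)) i = (ω + Pav ℓ ω (c t - c s)) j := by
  intro i j
  constructor
  · exact pattern_add_Pav ℓ ω (c t - c s) i j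
  · exact pattern_of_Dcard_eq (pattern_add_Pav ℓ ω (c t - c s))
      (nextT_no_drop c ℓ hst h) i j

/-- the collision is attained at `nextT` -/
lemma nextT_attained (hc : Continuous c) {s : ℝ≥0} {ω : Fin n → ℝ}
    (h : nextT c ℓ s ω ≠ ⊤) :
    nextT c ℓ s ω = (((nextT c ℓ s ω).toNNReal : ℝ≥0) : ℝ≥0∞) ∧
    s ≤ (nextT c ℓ s ω).toNNReal ∧
    Dcard (ω + Pav ℓ ω (c (nextT c ℓ s ω).toNNReal - c s)) < Dcard ω := by
  set T : Set ℝ≥0 := {t : ℝ≥0 | s ≤ t ∧ Dcard (ω + Pav ℓ ω (c t - c s)) < Dcard ω} with hT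
  have hset : {q : ℝ≥0∞ | ∃ t : ℝ≥0, q = (t : ℝ≥0∞) ∧ s ≤ t ∧
      Dcard (ω + Pav ℓ ω (c t - c s)) < Dcard ω} = (fun t : ℝ≥0 => (t : ℝ≥0∞)) '' T := by
    ext q
    constructor
    · rintro ⟨t, rfl, h1, h2⟩; exact ⟨t, ⟨h1, h2⟩, rfl⟩
    · rintro ⟨t, ⟨h1, h2⟩, rfl⟩; exact ⟨t, rfl, h1, h2⟩
  have hTne : T.Nonempty := by
    by_contra hcon
    rw [Set.not_nonempty_iff_eq_empty] at hcon
    rw [nextT, hset, hcon] at h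
    simp at h
  have hpos : 0 < Dcard ω := by
    rcases hTne with ⟨t, -, h2⟩
    omega
  have hTclosed : IsClosed T := by
    have h1 : T = Set.Ici s ∩
        ((fun t : ℝ≥0 => ω + Pav ℓ ω (c t - c s)) ⁻¹' {w | Dcard w ≤ Dcard ω - 1}) := by
      ext t
      simp only [hT, Set.mem_setOf_eq, Set.mem_inter_iff, Set.mem_Ici, Set.mem_preimage]
      constructor
      · rintro ⟨ha, hb⟩; exact ⟨ha, by omega⟩
      · rintro ⟨ha, hb⟩; exact ⟨ha, by omega⟩
    rw [h1]
    exact isClosed_Ici.inter ((isClosed_Dle _).preimage (continuous_phi c ℓ hc s ω))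
  have htau : nextT c ℓ s ω = ((sInf T : ℝ≥0) : ℝ≥0∞) := by
    rw [nextT, hset, sInf_image, ENNReal.coe_sInf hTne]
  have hmem : sInf T ∈ T := hTclosed.csInf_mem hTne (OrderBot.bddBelow T)
  refine ⟨?_, ?_, ?_⟩
  · rw [htau, ENNReal.toNNReal_coe]
  · rw [htau, ENNReal.toNNReal_coe]; exact hmem.1
  · rw [htau, ENNReal.toNNReal_coe]; exact hmem.2

end Dyn2
section Dyn3

variable {n : ℕ} (c : ℝ≥0 → Fin n → ℝ) (ℓ : Fin n → ℝ)

/-- the coalescing solution path, by recursion on the number of remaining collisions -/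
noncomputable def evolve : ℕ → ℝ≥0 → (Fin n → ℝ) → ℝ≥0 → (Fin n → ℝ)
  | 0, s, ω => fun t => ω + Pav ℓ ω (c t - c s)
  | (m+1), s, ω => fun t =>
      if (t : ℝ≥0∞) ≤ nextT c ℓ s ω then ω + Pav ℓ ω (c t - c s)
      else evolve m (nextT c ℓ s ω).toNNReal
        (ω + Pav ℓ ω (c (nextT c ℓ s ω).toNNReal - c s)) t

lemma evolve_zero (s : ℝ≥0) (ω : Fin n → ℝ) (t : ℝ≥0) :
    evolve c ℓ 0 s ω t = ω + Pav ℓ ω (c t - c s) := rfl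

lemma evolve_succ (m : ℕ) (s : ℝ≥0) (ω : Fin n → ℝ) (t : ℝ≥0) :
    evolve c ℓ (m+1) s ω t =
      if (t : ℝ≥0∞) ≤ nextT c ℓ s ω then ω + Pav ℓ ω (c t - c s)
      else evolve c ℓ m (nextT c ℓ s ω).toNNReal
        (ω + Pav ℓ ω (c (nextT c ℓ s ω).toNNReal - c s)) t := rfl

lemma evolve_at_start (m : ℕ) (s : ℝ≥0) (ω : Fin n → ℝ) : evolve c ℓ m s ω s = ω := by
  have hz : ω + Pav ℓ ω (c s - c s) = ω := by
    rw [sub_self, Pav_zero, add_zero]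
  cases m with
  | zero => rw [evolve_zero, hz]
  | succ m => rw [evolve_succ, if_pos (nextT_ge c ℓ s ω), hz]

lemma evolve_agree (m : ℕ) (s : ℝ≥0) (ω : Fin n → ℝ) {t : ℝ≥0}
    (hne : nextT c ℓ s ω ≠ ⊤) (ht : (nextT c ℓ s ω).toNNReal ≤ t) :
    evolve c ℓ (m+1) s ω t = evolve c ℓ m (nextT c ℓ s ω).toNNReal
      (ω + Pav ℓ ω (c (nextT c ℓ s ω).toNNReal - c s)) t := by
  rw [evolve_succ]
  by_cases h : (t : ℝ≥0∞) ≤ nextT c ℓ s ω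
  · have hte : t = (nextT c ℓ s ω).toNNReal := by
      apply le_antisymm _ ht
      have := ENNReal.toNNReal_mono hne h
      rwa [ENNReal.toNNReal_coe] at this
    rw [if_pos h, hte, evolve_at_start]
  · rw [if_neg h]

lemma evolve_continuous (hc : Continuous c) (m : ℕ) :
    ∀ (s : ℝ≥0) (ω : Fin n → ℝ), Continuous (evolve c ℓ m s ω) := by
  induction m with
  | zero => intro s ω; exact continuous_phi c ℓ hc s ω
  | succ m ih =>
    intro s ω
    by_cases hne : nextT c ℓ s ω = ⊤
    · have : evolve c ℓ (m+1) s ω = fun t => ω + Pav ℓ ω (c t - c s) := by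
        funext t
        rw [evolve_succ, if_pos (by rw [hne]; exact le_top)]
      rw [this]
      exact continuous_phi c ℓ hc s ω
    · set σ := (nextT c ℓ s ω).toNNReal with hσ
      have hcoe : ((σ : ℝ≥0) : ℝ≥0∞) = nextT c ℓ s ω := ENNReal.coe_toNNReal hne
      have : evolve c ℓ (m+1) s ω = fun t =>
          if t ≤ σ then ω + Pav ℓ ω (c t - c s)
          else evolve c ℓ m σ (ω + Pav ℓ ω (c σ - c s)) t := by
        funext t
        rw [evolve_succ]
        congr 1
        rw [eq_iff_iff, ← hcoe, ENNReal.coe_le_coe]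
      rw [this]
      apply Continuous.if_le (continuous_phi c ℓ hc s ω) (ih σ _) continuous_id
        continuous_const
      intro t htσ
      have ht' : t = σ := htσ
      rw [ht', evolve_at_start]

lemma evolve_pattern (m : ℕ) :
    ∀ (s : ℝ≥0) (ω : Fin n → ℝ) (t : ℝ≥0), s ≤ t →
      ∀ i j, ω i = ω j → evolve c ℓ m s ω t i = evolve c ℓ m s ω t j := by
  induction m with
  | zero => intro s ω t _ i j hij; exact pattern_add_Pav ℓ ω _ i j hij
  | succ m ih =>
    intro s ω t hst i j hij
    by_cases h : (t : ℝ≥0∞) ≤ nextT c ℓ s ω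
    · rw [evolve_succ, if_pos h]
      exact pattern_add_Pav ℓ ω _ i j hij
    · push_neg at h
      have hne : nextT c ℓ s ω ≠ ⊤ := by
        intro hcon; rw [hcon] at h; exact absurd h (not_lt.2 le_top)
      have hσt : (nextT c ℓ s ω).toNNReal ≤ t := by
        have := ENNReal.toNNReal_mono ENNReal.coe_ne_top h.le
        rwa [ENNReal.toNNReal_coe] at this
      rw [evolve_agree c ℓ m s ω hne hσt]
      exact ih _ _ t hσt i j (pattern_add_Pav ℓ ω _ i j hij)

lemma evolve_coal (hc : Continuous c) (m : ℕ) :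
    ∀ (s : ℝ≥0) (ω : Fin n → ℝ), 1 ≤ Dcard ω → Dcard ω ≤ m + 1 →
      ∀ (t t' : ℝ≥0), s ≤ t → t ≤ t' →
      ∀ i j, evolve c ℓ m s ω t i = evolve c ℓ m s ω t j →
        evolve c ℓ m s ω t' i = evolve c ℓ m s ω t' j := by
  induction m with
  | zero =>
    intro s ω h1 h2 t t' hst htt' i j _
    have htot : ∀ i' j', ω i' = ω j' := pattern_total_of_Dcard_eq_one (le_antisymm h2 h1)
    exact evolve_pattern c ℓ 0 s ω t' (le_trans hst htt') i j (htot i j)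
  | succ m ih =>
    intro s ω h1 h2 t t' hst htt' i j hij
    by_cases h : (t : ℝ≥0∞) < nextT c ℓ s ω
    · -- pattern at t equals pattern of ω
      have hiff := nextT_pattern_iff c ℓ hst h
      rw [evolve_succ, if_pos h.le] at hij
      exact evolve_pattern c ℓ (m+1) s ω t' (le_trans hst htt') i j ((hiff i j).2 hij)
    · push_neg at h
      have hne : nextT c ℓ s ω ≠ ⊤ := by
        intro hcon; rw [hcon] at h; exact absurd h (not_le.2 (lt_top_iff_ne_top.2
          ENNReal.coe_ne_top))
      have hσt : (nextT c ℓ s ω).toNNReal ≤ t := by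
        have := ENNReal.toNNReal_mono ENNReal.coe_ne_top h
        rwa [ENNReal.toNNReal_coe] at this
      rcases nextT_attained c ℓ hc hne with ⟨-, -, hdrop⟩
      have h1' : 1 ≤ Dcard (ω + Pav ℓ ω (c (nextT c ℓ s ω).toNNReal - c s)) := by
        have hn : 0 < n := by
          by_contra hcon
          push_neg at hcon
          have h0 : n = 0 := by omega
          subst h0
          simp [Dcard] at h1
        exact Dcard_pos hn _
      rw [evolve_agree c ℓ m s ω hne hσt] at hij
      rw [evolve_agree c ℓ m s ω hne (le_trans hσt htt')]
      exact ih _ _ h1' (by omega) t t' hσt htt' i j hij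
  
end Dyn3
section Dyn4

variable {n : ℕ} (c : ℝ≥0 → Fin n → ℝ) (ℓ : Fin n → ℝ)

lemma key_algebra (ω d e : Fin n → ℝ)
    (hiff : ∀ i j, ω i = ω j ↔ (ω + Pav ℓ ω d) i = (ω + Pav ℓ ω d) j) :
    ω + Pav ℓ ω (d + e) = (ω + Pav ℓ ω d) + Pav ℓ (ω + Pav ℓ ω d) e := by
  rw [Pav_add, ← Pav_congr e hiff, add_assoc]

lemma evolve_key (hc : Continuous c) (m : ℕ) :
    ∀ (s : ℝ≥0) (ω : Fin n → ℝ), 1 ≤ Dcard ω → Dcard ω ≤ m + 1 →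
      ∀ (s' t : ℝ≥0), s ≤ s' → s' ≤ t →
      (∀ r, s' ≤ r → r < t → Dcard (evolve c ℓ m s ω r) = Dcard (evolve c ℓ m s ω s')) →
      evolve c ℓ m s ω t = evolve c ℓ m s ω s'
        + Pav ℓ (evolve c ℓ m s ω s') (c t - c s') := by
  induction m with
  | zero =>
    intro s ω h1 h2 s' t hss' hs't _
    have htot : ∀ i' j', ω i' = ω j' := pattern_total_of_Dcard_eq_one (le_antisymm h2 h1)
    have hiff : ∀ i j, ω i = ω j ↔ (ω + Pav ℓ ω (c s' - c s)) i
        = (ω + Pav ℓ ω (c s' - c s)) j := by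
      intro i j
      constructor
      · exact pattern_add_Pav ℓ ω _ i j
      · intro _; exact htot i j
    rw [evolve_zero, evolve_zero,
      show c t - c s = (c s' - c s) + (c t - c s') from (sub_add_sub_cancel' _ _ _).symm]
    exact key_algebra ℓ ω _ _ hiff
  | succ m ih =>
    intro s ω h1 h2 s' t hss' hs't hDconst
    by_cases hts' : t = s'
    · subst hts'
      rw [sub_self, Pav_zero, add_zero]
    have hs'lt : s' < t := lt_of_le_of_ne hs't (Ne.symm hts')
    by_cases hA : (t : ℝ≥0∞) ≤ nextT c ℓ s ω
    · have hs'ltT : (s' : ℝ≥0∞) < nextT c ℓ s ω :=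
        lt_of_lt_of_le (ENNReal.coe_lt_coe.2 hs'lt) hA
      have hiff := nextT_pattern_iff c ℓ hss' hs'ltT
      rw [evolve_succ, if_pos hA, evolve_succ, if_pos hs'ltT.le,
        show c t - c s = (c s' - c s) + (c t - c s') from (sub_add_sub_cancel' _ _ _).symm]
      exact key_algebra ℓ ω _ _ hiff
    · push_neg at hA
      have hne : nextT c ℓ s ω ≠ ⊤ := by
        intro hcon; rw [hcon] at hA
        exact absurd hA (not_lt.2 le_top)
      set σ := (nextT c ℓ s ω).toNNReal with hσdef
      have hcoe : ((σ : ℝ≥0) : ℝ≥0∞) = nextT c ℓ s ω := ENNReal.coe_toNNReal hne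
      rcases nextT_attained c ℓ hc hne with ⟨-, hsσ, hdrop⟩
      rw [← hσdef] at hdrop
      have hσt : σ < t := by
        rw [← ENNReal.coe_lt_coe, hcoe]
        exact hA
      have hn : 0 < n := by
        by_contra hcon
        push_neg at hcon
        have h0 : n = 0 := by omega
        subst h0
        simp [Dcard] at h1
      have h1' : 1 ≤ Dcard (ω + Pav ℓ ω (c σ - c s)) := Dcard_pos hn _
      by_cases hB : s' < σ
      · exfalso
        have hW : evolve c ℓ (m+1) s ω σ = ω + Pav ℓ ω (c σ - c s) := by
          rw [evolve_succ, if_pos (le_of_eq hcoe)]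
        have hWs' : evolve c ℓ (m+1) s ω s' = ω + Pav ℓ ω (c s' - c s) := by
          rw [evolve_succ, if_pos (le_of_lt (lt_of_lt_of_le (ENNReal.coe_lt_coe.2 hB)
            (le_of_eq hcoe)))]
        have hD1 := hDconst σ hB.le hσt
        rw [hW, hWs'] at hD1
        have hD2 : Dcard (ω + Pav ℓ ω (c s' - c s)) = Dcard ω :=
          nextT_no_drop c ℓ hss' (lt_of_lt_of_le (ENNReal.coe_lt_coe.2 hB) (le_of_eq hcoe))
        rw [hD2] at hD1
        omega
      · push_neg at hB
        rw [evolve_agree c ℓ m s ω hne hσt.le, evolve_agree c ℓ m s ω hne hB]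
        apply ih σ _ h1' (by omega) s' t hB hs't
        intro r hr1 hr2
        have hD := hDconst r hr1 hr2
        rwa [evolve_agree c ℓ m s ω hne (le_trans hB hr1),
          evolve_agree c ℓ m s ω hne hB] at hD

end Dyn4
section Dyn5

variable {n : ℕ} (c : ℝ≥0 → Fin n → ℝ) (ℓ : Fin n → ℝ) (v : Fin n → ℝ)

/-- per-interval increment formula implies the per-k summand identity -/
lemma perk_of_key (u : ℝ≥0 → Fin n → ℝ) (hu : Continuous u)
    (hcoal : ∀ s t : ℝ≥0, s ≤ t → ∀ i j, u s i = u s j → u t i = u t j)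
    (hkey : ∀ s' t : ℝ≥0, s' ≤ t →
      (∀ r, s' ≤ r → r < t → Dcard (u r) = Dcard (u s')) →
      u t = u s' + Pav ℓ (u s') (c t - c s'))
    (k : ℕ) (t : ℝ≥0) :
    Pav ℓ (u (mV u (k+1) t)) (c (mV u k t) - c (mV u (k+1) t))
      = u (mV u k t) - u (mV u (k+1) t) := by
  set s' := mV u (k+1) t with hs'def
  set s := mV u k t with hsdef
  have hss' : s' ≤ s := mV_antitone_k (Nat.le_succ k) t
  by_cases heq : s' = s
  · rw [heq, sub_self, Pav_zero, sub_self]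
  · have hlt : s' < s := lt_of_le_of_ne hss' heq
    have hst : s ≤ t := mV_le_t u k t
    have htk1 : tauV u (k+1) ≤ (t : ℝ≥0∞) := by
      by_contra hcon
      push_neg at hcon
      have : s' = t := mV_of_le_tau hcon.le
      rw [this] at hlt
      exact absurd hst (not_le.2 hlt)
    have hcoes' : ((s' : ℝ≥0) : ℝ≥0∞) = tauV u (k+1) := mV_coe_of_tau_le htk1
    have hneT : tauV u (k+1) ≠ ⊤ := ne_top_of_le_ne_top ENNReal.coe_ne_top htk1
    have hs'toNN : (tauV u (k+1)).toNNReal = s' := by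
      rw [← hcoes', ENNReal.toNNReal_coe]
    have hDs'le : Dcard (u s') ≤ k + 1 := by
      have h := (tauV_attained hu hneT).2
      rwa [hs'toNN] at h
    have hscoe : ((s : ℝ≥0) : ℝ≥0∞) = min (tauV u k) (t : ℝ≥0∞) :=
      ENNReal.coe_toNNReal (ne_top_of_le_ne_top ENNReal.coe_ne_top (min_le_right _ _))
    have hrlt : ∀ r, s' ≤ r → r < s → Dcard (u r) = Dcard (u s') := by
      intro r hr1 hr2
      have hrk : (r : ℝ≥0∞) < tauV u k := by
        calc (r : ℝ≥0∞) < (s : ℝ≥0∞) := ENNReal.coe_lt_coe.2 hr2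
        _ = min (tauV u k) (t : ℝ≥0∞) := hscoe
        _ ≤ tauV u k := min_le_left _ _
      have h1 : k < Dcard (u r) := lt_tauV_imp hrk
      have h2 : Dcard (u r) ≤ Dcard (u s') := Dcard_antitone_of_coal hcoal hr1
      omega
    rw [hkey s' s hss' hrlt, add_sub_cancel_left]

/-- the vector form of the integral equation, for the constructed solution -/
lemma veq_of_key (hn : 0 < n) (u : ℝ≥0 → Fin n → ℝ) (hu : Continuous u)
    (hu0 : u 0 = v)
    (hcoal : ∀ s t : ℝ≥0, s ≤ t → ∀ i j, u s i = u s j → u t i = u t j)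
    (hkey : ∀ s' t : ℝ≥0, s' ≤ t →
      (∀ r, s' ≤ r → r < t → Dcard (u r) = Dcard (u s')) →
      u t = u s' + Pav ℓ (u s') (c t - c s')) (t : ℝ≥0) :
    u t = v + ∑ k ∈ Finset.range n,
      Pav ℓ (u (mV u (k+1) t)) (c (mV u k t) - c (mV u (k+1) t)) := by
  rw [Finset.sum_congr rfl (fun k _ => perk_of_key c ℓ u hu hcoal hkey k t),
    Finset.sum_range_sub' (fun k => u (mV u k t)), mV_zero_k hn, mV_n, hu0]
  abel

/-- `u` restricted to `[τ_{k+1}, τ_k]` follows the frozen averaged motion -/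
lemma claim_of_vecEq (u : ℝ≥0 → Fin n → ℝ)
    (hveq : ∀ t : ℝ≥0, u t = v + ∑ k ∈ Finset.range n,
      Pav ℓ (u (mV u (k+1) t)) (c (mV u k t) - c (mV u (k+1) t)))
    (k : ℕ) (t : ℝ≥0) (h1 : tauV u (k+1) ≤ (t : ℝ≥0∞)) (h2 : (t : ℝ≥0∞) ≤ tauV u k) :
    u t = u (tauV u (k+1)).toNNReal
      + Pav ℓ (u (tauV u (k+1)).toNNReal) (c t - c (tauV u (k+1)).toNNReal) := by
  set s₁ := (tauV u (k+1)).toNNReal with hs₁def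
  have hne : tauV u (k+1) ≠ ⊤ := ne_top_of_le_ne_top ENNReal.coe_ne_top h1
  have hcoe : ((s₁ : ℝ≥0) : ℝ≥0∞) = tauV u (k+1) := ENNReal.coe_toNNReal hne
  by_cases hkn : n ≤ k
  · have htauk : tauV u k = 0 :=
      le_antisymm (le_trans (tauV_antitone hkn) (le_of_eq (tauV_n u))) zero_le
    have ht0 : t = 0 := by
      rw [htauk] at h2
      exact_mod_cast le_antisymm (by exact_mod_cast h2) zero_le
    have hs₁0 : s₁ = 0 := by
      have : tauV u (k+1) = 0 :=
        le_antisymm (le_trans (tauV_antitone (by omega)) (le_of_eq (tauV_n u))) zero_le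
      rw [hs₁def, this]
      rfl
    rw [ht0, hs₁0, sub_self, Pav_zero, add_zero]
  · push_neg at hkn
    have hmt : ∀ j : ℕ, j ≤ k → mV u j t = t :=
      fun j hj => mV_of_le_tau (le_trans h2 (tauV_antitone hj))
    have hmτ : ∀ j : ℕ, k+1 ≤ j → ((mV u j t : ℝ≥0) : ℝ≥0∞) = tauV u j :=
      fun j hj => mV_coe_of_tau_le (le_trans (tauV_antitone hj) h1)
    have hmt' : ∀ j : ℕ, j ≤ k+1 → mV u j s₁ = s₁ :=
      fun j hj => mV_of_le_tau (by rw [hcoe]; exact tauV_antitone hj)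
    have hmτ' : ∀ j : ℕ, k+1 ≤ j → ((mV u j s₁ : ℝ≥0) : ℝ≥0∞) = tauV u j :=
      fun j hj => mV_coe_of_tau_le (le_trans (tauV_antitone hj) (le_of_eq hcoe.symm))
    have hsame : ∀ j : ℕ, k+1 ≤ j → mV u j t = mV u j s₁ := by
      intro j hj
      have h := (hmτ j hj).trans (hmτ' j hj).symm
      exact_mod_cast h
    have hmk1t : mV u (k+1) t = s₁ := by
      have h := (hmτ (k+1) (le_refl _)).trans hcoe.symm
      exact_mod_cast h
    have hdiff : (∑ j ∈ Finset.range n,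
          Pav ℓ (u (mV u (j+1) t)) (c (mV u j t) - c (mV u (j+1) t)))
        - (∑ j ∈ Finset.range n,
          Pav ℓ (u (mV u (j+1) s₁)) (c (mV u j s₁) - c (mV u (j+1) s₁)))
        = Pav ℓ (u s₁) (c t - c s₁) := by
      rw [← Finset.sum_sub_distrib]
      rw [Finset.sum_eq_single k]
      · rw [hmk1t, hmt k (le_refl _), hmt' k (by omega), hmt' (k+1) (le_refl _),
          sub_self, Pav_zero, sub_zero]
      · intro j _ hjk
        rcases lt_or_gt_of_ne hjk with hlt | hgt
        · rw [hmt j (by omega), hmt (j+1) (by omega), hmt' j (by omega),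
            hmt' (j+1) (by omega), sub_self, Pav_zero, sub_self, Pav_zero, sub_self]
        · rw [hsame j (by omega), hsame (j+1) (by omega), sub_self]
      · intro hmem
        exact absurd (Finset.mem_range.2 hkn) hmem
    have ht := hveq t
    have hs := hveq s₁
    have h3 : u t - u s₁ = (∑ j ∈ Finset.range n,
          Pav ℓ (u (mV u (j+1) t)) (c (mV u j t) - c (mV u (j+1) t)))
        - (∑ j ∈ Finset.range n,
          Pav ℓ (u (mV u (j+1) s₁)) (c (mV u j s₁) - c (mV u (j+1) s₁))) := by
      rw [ht, hs]
      abel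
    have h4 : u t - u s₁ = Pav ℓ (u s₁) (c t - c s₁) := h3.trans hdiff
    rw [← h4]
    abel

end Dyn5
section Dyn6

variable {n : ℕ} (c : ℝ≥0 → Fin n → ℝ) (ℓ : Fin n → ℝ) (v : Fin n → ℝ)

lemma coal_unique (hn : 0 < n) (u w : ℝ≥0 → Fin n → ℝ)
    (hu : Continuous u) (hw : Continuous w)
    (hu0 : u 0 = v) (hw0 : w 0 = v)
    (hvequ : ∀ t : ℝ≥0, u t = v + ∑ k ∈ Finset.range n,
      Pav ℓ (u (mV u (k+1) t)) (c (mV u k t) - c (mV u (k+1) t)))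
    (hveqw : ∀ t : ℝ≥0, w t = v + ∑ k ∈ Finset.range n,
      Pav ℓ (w (mV w (k+1) t)) (c (mV w k t) - c (mV w (k+1) t))) :
    ∀ t, u t = w t := by
  have main : ∀ i : ℕ, tauV u (n - i) = tauV w (n - i) ∧
      ∀ t : ℝ≥0, (t : ℝ≥0∞) ≤ tauV w (n - i) → u t = w t := by
    intro i
    induction i with
    | zero =>
      simp only [Nat.sub_zero]
      refine ⟨by rw [tauV_n, tauV_n], ?_⟩
      intro t ht
      rw [tauV_n] at ht
      have ht0 : t = 0 := by exact_mod_cast le_antisymm (by exact_mod_cast ht) zero_le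
      rw [ht0, hu0, hw0]
    | succ i IH =>
      by_cases hin : n ≤ i
      · have hni : n - (i+1) = n - i := by omega
        rw [hni]
        exact IH
      · push_neg at hin
        set k := n - (i+1) with hkdef
        have hk1 : k + 1 = n - i := by omega
        have IH1 : tauV u (k+1) = tauV w (k+1) := by rw [hk1]; exact IH.1
        have IH2 : ∀ t : ℝ≥0, (t : ℝ≥0∞) ≤ tauV w (k+1) → u t = w t := by
          intro t ht
          exact IH.2 t (by rw [← hk1]; exact ht)
        have Sub1 : ∀ t : ℝ≥0, (t : ℝ≥0∞) ≤ tauV w k → (t : ℝ≥0∞) ≤ tauV u k →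
            u t = w t := by
          intro t h2w h2u
          by_cases hcase : (t : ℝ≥0∞) ≤ tauV w (k+1)
          · exact IH2 t hcase
          · push_neg at hcase
            have h1w : tauV w (k+1) ≤ (t : ℝ≥0∞) := hcase.le
            have h1u : tauV u (k+1) ≤ (t : ℝ≥0∞) := by rw [IH1]; exact h1w
            have hclw := claim_of_vecEq c ℓ v w hveqw k t h1w h2w
            have hclu := claim_of_vecEq c ℓ v u hvequ k t h1u h2u
            have hs₁eq : (tauV u (k+1)).toNNReal = (tauV w (k+1)).toNNReal := by rw [IH1]
            have hneW : tauV w (k+1) ≠ ⊤ := ne_top_of_le_ne_top ENNReal.coe_ne_top h1w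
            have hus₁ : u (tauV w (k+1)).toNNReal = w (tauV w (k+1)).toNNReal :=
              IH2 _ (le_of_eq (ENNReal.coe_toNNReal hneW))
            rw [hclu, hclw, hs₁eq, hus₁]
        have Sub2 : tauV u k = tauV w k := by
          by_contra hne
          rcases lt_or_gt_of_ne hne with hlt | hlt
          · have hneT : tauV u k ≠ ⊤ := ne_top_of_lt hlt
            obtain ⟨hcoe, hD⟩ := tauV_attained hu hneT
            set t₀ := (tauV u k).toNNReal with ht₀def
            have h2w : (t₀ : ℝ≥0∞) ≤ tauV w k := by rw [← hcoe]; exact hlt.le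
            have h2u : (t₀ : ℝ≥0∞) ≤ tauV u k := le_of_eq hcoe.symm
            have heq := Sub1 t₀ h2w h2u
            have hDw : Dcard (w t₀) ≤ k := by rw [← heq]; exact hD
            have hle : tauV w k ≤ (t₀ : ℝ≥0∞) := tauV_le_of_Dle hDw
            rw [hcoe] at hlt
            exact absurd hle (not_le.2 hlt)
          · have hneT : tauV w k ≠ ⊤ := ne_top_of_lt hlt
            obtain ⟨hcoe, hD⟩ := tauV_attained hw hneT
            set t₀ := (tauV w k).toNNReal with ht₀def
            have h2u : (t₀ : ℝ≥0∞) ≤ tauV u k := by rw [← hcoe]; exact hlt.le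
            have h2w : (t₀ : ℝ≥0∞) ≤ tauV w k := le_of_eq hcoe.symm
            have heq := Sub1 t₀ h2w h2u
            have hDu : Dcard (u t₀) ≤ k := by rw [heq]; exact hD
            have hle : tauV u k ≤ (t₀ : ℝ≥0∞) := tauV_le_of_Dle hDu
            rw [hcoe] at hlt
            exact absurd hle (not_le.2 hlt)
        refine ⟨Sub2, ?_⟩
        intro t ht
        exact Sub1 t ht (by rw [Sub2]; exact ht)
  intro t
  have h := (main n).2
  rw [Nat.sub_self] at h
  exact h t (by rw [tauV_zero hn w]; exact le_top)

end Dyn6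
section Glue

variable {n : ℕ} (a : Fin (n + 1) → ℝ) (ha : StrictMono a) (ha0 : a 0 = 0)
  (ha1 : a (Fin.last n) = 1)

include ha ha0 ha1 in
lemma tauEx_eq (y : C(ℝ≥0, Lp ℝ 2 μ01)) (u : ℝ≥0 → Fin n → ℝ)
    (hrep : ∀ t, y t = toF a (u t)) (k : ℕ) : tauEx n a y k = tauV u k := by
  unfold tauEx tauV
  congr 1
  ext s
  constructor
  · rintro ⟨t, rfl, h⟩
    rw [hrep t, NvalG_toF a ha ha0 ha1] at h
    exact ⟨t, rfl, h⟩
  · rintro ⟨t, rfl, h⟩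
    refine ⟨t, rfl, ?_⟩
    rw [hrep t, NvalG_toF a ha ha0 ha1]
    exact h

include ha ha0 ha1 in
lemma tmin_eq (y : C(ℝ≥0, Lp ℝ 2 μ01)) (u : ℝ≥0 → Fin n → ℝ)
    (hrep : ∀ t, y t = toF a (u t)) (k : ℕ) (t : ℝ≥0) : tmin n a y k t = mV u k t := by
  unfold tmin mV
  rw [tauEx_eq a ha ha0 ha1 y u hrep k]

include ha ha0 ha1 in
lemma mid_mem (j : Fin n) :
    ((a j.castSucc + a j.succ)/2) ∈ Set.Ico (a j.castSucc) (a j.succ) ∧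
    ((a j.castSucc + a j.succ)/2) ∈ Set.Ioo (0:ℝ) 1 := by
  have hlt : a j.castSucc < a j.succ := ha (Fin.castSucc_lt_succ (i := j))
  have h0 : 0 ≤ a j.castSucc := by
    rw [← ha0]; exact ha.monotone (Fin.zero_le _)
  have h1 : a j.succ ≤ 1 := by
    rw [← ha1]; exact ha.monotone (Fin.le_last _)
  exact ⟨⟨by linarith, by linarith⟩, ⟨by linarith, by linarith⟩⟩

end Glue
/-- For a nondecreasing step function `g = Σ_j v_j 1_{[a_{j-1},a_j)}`
and every continuous `x : [0,∞) → L2(g)` there is a unique `y ∈ Coal_ex(g)` with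
`y_t = g + ∫_0^t pr_{y_s} dx_s` for all `t ≥ 0`, the integral being the finite sum
`Σ_{k=1}^n (pr_{y_{τ_k ∧ t}} x_{τ_{k-1} ∧ t} − pr_{y_{τ_k ∧ t}} x_{τ_k ∧ t})`. -/
theorem stmt15 (n : ℕ) (hn : 0 < n) (v : Fin n → ℝ) (hv : StrictMono v)
    (a : Fin (n + 1) → ℝ) (ha : StrictMono a) (ha0 : a 0 = 0) (ha1 : a (Fin.last n) = 1)
    (x : C(ℝ≥0, Lp ℝ 2 μ01)) (hx : ∀ t : ℝ≥0, x t ∈ Vg n a) :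
    ∃! y : C(ℝ≥0, Lp ℝ 2 μ01), y ∈ CoalEx n a v ∧
      ∀ t : ℝ≥0, y t = gstep n a v +
        ∑ k : Fin n,
          (prL (y (tmin n a y ((k : ℕ) + 1) t)) (x (tmin n a y (k : ℕ) t)) -
           prL (y (tmin n a y ((k : ℕ) + 1) t)) (x (tmin n a y ((k : ℕ) + 1) t))) := by
  classical
  -- the coordinate path of `x`
  set cv : ℝ≥0 → Fin n → ℝ := fun t j => coefJ n a (x t) j with hcvdef
  have hxc : ∀ t, toF a (cv t) = x t := by
    intro t
    rcases (mem_Vg_iff a).1 (hx t) with ⟨d, hd⟩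
    have hcd : cv t = d := by
      funext j
      rw [hcvdef]
      show coefJ n a (x t) j = d j
      rw [← hd, coefJ_toF a ha ha0 ha1]
    rw [hcd, hd]
  have hcv : Continuous cv := by
    apply continuous_pi
    intro j
    show Continuous fun t => coefJ n a (x t) j
    unfold coefJ
    exact (Continuous.inner x.continuous continuous_const).div_const _
  -- the solution in coordinates
  set w : ℝ≥0 → Fin n → ℝ := evolve cv (lenJ a) (n-1) 0 v with hwdef
  have hDv : Dcard v = n := Dcard_eq_n hv.injective
  have h1v : 1 ≤ Dcard v := by omega
  have h2v : Dcard v ≤ (n-1)+1 := by omega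
  have hwc : Continuous w := evolve_continuous cv (lenJ a) hcv (n-1) 0 v
  have hw0 : w 0 = v := evolve_at_start cv (lenJ a) (n-1) 0 v
  have hwcoal : ∀ s t : ℝ≥0, s ≤ t → ∀ i j, w s i = w s j → w t i = w t j :=
    fun s t hst => evolve_coal cv (lenJ a) hcv (n-1) 0 v h1v h2v s t (show (0:ℝ≥0) ≤ s from zero_le) hst
  have hwkey : ∀ s' t : ℝ≥0, s' ≤ t →
      (∀ r, s' ≤ r → r < t → Dcard (w r) = Dcard (w s')) →
      w t = w s' + Pav (lenJ a) (w s') (cv t - cv s') :=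
    fun s' t h1 h2 => evolve_key cv (lenJ a) hcv (n-1) 0 v h1v h2v s' t (show (0:ℝ≥0) ≤ s' from zero_le) h1 h2
  have hwveq := veq_of_key cv (lenJ a) v hn w hwc hw0 hwcoal hwkey
  -- the candidate solution in L2
  set y : C(ℝ≥0, Lp ℝ 2 μ01) :=
    ⟨fun t => toF a (w t), (continuous_toF a).comp hwc⟩ with hydef
  have hyval : ∀ t, y t = toF a (w t) := fun t => rfl
  -- translation of the equation to coordinates
  have heqn : ∀ (y' : C(ℝ≥0, Lp ℝ 2 μ01)) (u : ℝ≥0 → Fin n → ℝ),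
      (∀ t, y' t = toF a (u t)) →
      ((∀ t : ℝ≥0, y' t = gstep n a v +
        ∑ k : Fin n,
          (prL (y' (tmin n a y' ((k : ℕ) + 1) t)) (x (tmin n a y' (k : ℕ) t)) -
           prL (y' (tmin n a y' ((k : ℕ) + 1) t)) (x (tmin n a y' ((k : ℕ) + 1) t)))) ↔
       (∀ t : ℝ≥0, u t = v + ∑ k ∈ Finset.range n,
          Pav (lenJ a) (u (mV u (k+1) t)) (cv (mV u k t) - cv (mV u (k+1) t)))) := by
    intro y' u hrep
    have htm : ∀ (k : ℕ) (t : ℝ≥0), tmin n a y' k t = mV u k t :=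
      tmin_eq a ha ha0 ha1 y' u hrep
    have hRHS : ∀ t : ℝ≥0, (gstep n a v +
        ∑ k : Fin n,
          (prL (y' (tmin n a y' ((k : ℕ) + 1) t)) (x (tmin n a y' (k : ℕ) t)) -
           prL (y' (tmin n a y' ((k : ℕ) + 1) t)) (x (tmin n a y' ((k : ℕ) + 1) t))))
        = toF a (v + ∑ k ∈ Finset.range n,
          Pav (lenJ a) (u (mV u (k+1) t)) (cv (mV u k t) - cv (mV u (k+1) t))) := by
      intro t
      have hterm : ∀ k : ℕ,
          (prL (y' (tmin n a y' (k + 1) t)) (x (tmin n a y' k t)) -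
           prL (y' (tmin n a y' (k + 1) t)) (x (tmin n a y' (k + 1) t)))
          = toF a (Pav (lenJ a) (u (mV u (k+1) t)) (cv (mV u k t) - cv (mV u (k+1) t))) := by
        intro k
        rw [htm, htm, hrep, ← hxc, ← hxc,
          prL_toF a ha ha0 ha1, prL_toF a ha ha0 ha1, Pav_sub, toF_sub]
      calc gstep n a v + ∑ k : Fin n,
          (prL (y' (tmin n a y' ((k : ℕ) + 1) t)) (x (tmin n a y' (k : ℕ) t)) -
           prL (y' (tmin n a y' ((k : ℕ) + 1) t)) (x (tmin n a y' ((k : ℕ) + 1) t)))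
          = toF a v + ∑ k : Fin n, toF a (Pav (lenJ a) (u (mV u ((k:ℕ)+1) t))
            (cv (mV u (k:ℕ) t) - cv (mV u ((k:ℕ)+1) t))) := by
            rw [gstep_eq_toF]
            congr 1
            exact Finset.sum_congr rfl fun k _ => hterm (k : ℕ)
        _ = toF a v + ∑ k ∈ Finset.range n, toF a (Pav (lenJ a) (u (mV u (k+1) t))
            (cv (mV u k t) - cv (mV u (k+1) t))) := by
            congr 1
            exact Fin.sum_univ_eq_sum_range (fun k => toF a (Pav (lenJ a) (u (mV u (k+1) t))
              (cv (mV u k t) - cv (mV u (k+1) t)))) n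
        _ = toF a (v + ∑ k ∈ Finset.range n,
            Pav (lenJ a) (u (mV u (k+1) t)) (cv (mV u k t) - cv (mV u (k+1) t))) := by
            rw [toF_add]
            congr 1
            rw [show ∀ d : Fin n → ℝ, toF a d = toFL a d from fun _ => rfl]
            exact (map_sum (toFL a) _ _).symm
    constructor
    · intro h t
      apply toF_inj a ha ha0 ha1
      rw [← hRHS t, ← hrep t]
      exact h t
    · intro h t
      rw [hRHS t, hrep t, h t]
  -- membership of the candidate in CoalEx
  have hymem : y ∈ CoalEx n a v := by
    refine ⟨?_, ?_, ?_⟩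
    · intro t
      exact (mem_Vg_iff a).2 ⟨w t, (hyval t).symm⟩
    · rw [hyval 0, hw0, gstep_eq_toF]
    · intro p q hp hq s t hst hpq
      rcases exists_interval a ha0 ha1 (⟨le_of_lt hp.1, hp.2⟩ : p ∈ Set.Ico (0:ℝ) 1)
        with ⟨j₁, hj₁⟩
      rcases exists_interval a ha0 ha1 (⟨le_of_lt hq.1, hq.2⟩ : q ∈ Set.Ico (0:ℝ) 1)
        with ⟨j₂, hj₂⟩
      have hval : ∀ r : ℝ≥0, ∀ (p' : ℝ) (j : Fin n),
          p' ∈ Set.Ico (a j.castSucc) (a j.succ) → repG n a (y r) p' = w r j := by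
        intro r p' j hj
        rw [hyval r, repG_toF a ha ha0 ha1, stepF_eq_of_mem a ha hj]
      rw [hval s p j₁ hj₁, hval s q j₂ hj₂] at hpq
      rw [hval t p j₁ hj₁, hval t q j₂ hj₂]
      exact hwcoal s t hst j₁ j₂ hpq
  refine ⟨y, ⟨hymem, (heqn y w hyval).2 hwveq⟩, ?_⟩
  -- uniqueness
  rintro y' ⟨⟨hVg', h0', hcoal'⟩, heq'⟩
  set u : ℝ≥0 → Fin n → ℝ := fun t j => coefJ n a (y' t) j with hudef
  have hrep' : ∀ t, y' t = toF a (u t) := by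
    intro t
    rcases (mem_Vg_iff a).1 (hVg' t) with ⟨d, hd⟩
    have hcd : u t = d := by
      funext j
      show coefJ n a (y' t) j = d j
      rw [← hd, coefJ_toF a ha ha0 ha1]
    rw [hcd, hd]
  have hu0 : u 0 = v := by
    apply toF_inj a ha ha0 ha1
    rw [← hrep' 0, h0', gstep_eq_toF]
  have hucont : Continuous u := by
    apply continuous_pi
    intro j
    show Continuous fun t => coefJ n a (y' t) j
    unfold coefJ
    exact (Continuous.inner y'.continuous continuous_const).div_const _
  have hucoal : ∀ s t : ℝ≥0, s ≤ t → ∀ i j, u s i = u s j → u t i = u t j := by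
    intro s t hst i j hij
    have hmi := mid_mem a ha ha0 ha1 i
    have hmj := mid_mem a ha ha0 ha1 j
    have hval : ∀ r : ℝ≥0, ∀ (p' : ℝ) (j' : Fin n),
        p' ∈ Set.Ico (a j'.castSucc) (a j'.succ) → repG n a (y' r) p' = u r j' := by
      intro r p' j' hj'
      rw [hrep' r, repG_toF a ha ha0 ha1, stepF_eq_of_mem a ha hj']
    have h := hcoal' _ _ hmi.2 hmj.2 s t hst
      (by rw [hval s _ i hmi.1, hval s _ j hmj.1]; exact hij)
    rw [hval t _ i hmi.1, hval t _ j hmj.1] at h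
    exact h
  have hveq' := (heqn y' u hrep').1 heq'
  have huw : ∀ t, u t = w t :=
    coal_unique cv (lenJ a) v hn u w hucont hwc hu0 hw0 hveq' hwveq
  apply ContinuousMap.ext
  intro t
  rw [hrep' t, huw t, ← hyval t]
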